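/- arXiv:1110.3493 — 3 statements merged into one kernel-verified Lean document; each statement's English description precedes it below -/
import Mathlib

section
/- For every integer k ≥ 3: ∑_{ν=3}^{k} (ν(ν−1)/2) ζ₂(k+3−ν, ν+1) + ((k+1)(k+2)/2) ζ₂(2, k+2) + (k+1)(k+2) ζ₂(1, k+3) = ζ(k+4). -/
open scoped BigOperators

/-- Double zeta value `ζ₂(k₁,k₂) = ∑_{1 ≤ m < m+n} 1/(m^{k₁} (m+n)^{k₂})`. -/
noncomputable def zeta2 (k1 k2 : ℕ) : ℂ :=
  ∑' p : ℕ × ℕ, 1 / (((p.1 : ℂ) + 1) ^ k1 * ((p.1 : ℂ) + 1 + ((p.2 : ℂ) + 1)) ^ k2)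

namespace DZ

/-- Real version of the double zeta summand. -/
noncomputable def r (k1 k2 : ℕ) (p : ℕ × ℕ) : ℝ :=
  1 / (((p.1 : ℝ) + 1) ^ k1 * ((p.1 : ℝ) + 1 + ((p.2 : ℝ) + 1)) ^ k2)

/-- Real double zeta value. -/
noncomputable def Z (k1 k2 : ℕ) : ℝ := ∑' p, r k1 k2 p

lemma summable_sq : Summable (fun i : ℕ => 1 / ((i : ℝ) + 1) ^ 2) := by
  have h : Summable (fun n : ℕ => 1 / (n : ℝ) ^ 2) :=
    Real.summable_one_div_nat_pow.mpr one_lt_two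
  have h2 := (_root_.summable_nat_add_iff (f := fun n : ℕ => 1 / (n : ℝ) ^ 2) 1).mpr h
  refine h2.congr fun i => ?_
  push_cast
  ring

lemma summable_base :
    Summable (fun p : ℕ × ℕ => (1 / ((p.1 : ℝ) + 1) ^ 2) * (1 / ((p.2 : ℝ) + 1) ^ 2)) := by
  apply Summable.mul_of_nonneg summable_sq summable_sq
  · intro i; positivity
  · intro i; positivity

lemma summable_den {F : ℕ × ℕ → ℝ}
    (hge : ∀ p : ℕ × ℕ, ((p.1 : ℝ) + 1) ^ 2 * ((p.2 : ℝ) + 1) ^ 2 ≤ F p) :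
    Summable fun p => 1 / F p := by
  refine Summable.of_nonneg_of_le (fun p => ?_) (fun p => ?_) summable_base
  · have h0 : (0:ℝ) < F p := lt_of_lt_of_le (by positivity) (hge p)
    positivity
  · rw [div_mul_div_comm, one_mul]
    exact one_div_le_one_div_of_le (by positivity) (hge p)

lemma cast_one_le (i : ℕ) : (1:ℝ) ≤ (i : ℝ) + 1 := by
  have := Nat.cast_nonneg (α := ℝ) i; linarith

lemma summable_r {k1 k2 : ℕ} (h1 : 1 ≤ k1) (h2 : 2 ≤ k2) (h3 : 2 ≤ k1 ∨ 3 ≤ k2) :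
    Summable (r k1 k2) := by
  unfold r
  apply summable_den
  intro p
  set M : ℝ := (p.1 : ℝ) + 1 with hMdef
  set D : ℝ := (p.2 : ℝ) + 1 with hDdef
  have hM : (1:ℝ) ≤ M := cast_one_le _
  have hD : (1:ℝ) ≤ D := cast_one_le _
  have hN : (1:ℝ) ≤ M + D := by linarith
  rcases h3 with h3 | h3
  · have hA : M ^ 2 ≤ M ^ k1 := pow_le_pow_right₀ hM h3
    have hB : D ^ 2 ≤ (M + D) ^ k2 := by
      calc D ^ 2 ≤ (M + D) ^ 2 := by nlinarith
        _ ≤ (M + D) ^ k2 := pow_le_pow_right₀ hN h2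
    exact mul_le_mul hA hB (by positivity) (by positivity)
  · have hA : M ≤ M ^ k1 := le_self_pow₀ hM (by omega)
    have hB : M * D ^ 2 ≤ (M + D) ^ k2 := by
      have hsq : D ^ 2 ≤ (M + D) ^ 2 := by nlinarith
      calc M * D ^ 2 ≤ (M + D) * (M + D) ^ 2 :=
            mul_le_mul (by linarith) hsq (by positivity) (by linarith)
        _ = (M + D) ^ 3 := by ring
        _ ≤ (M + D) ^ k2 := pow_le_pow_right₀ hN h3
    calc M ^ 2 * D ^ 2 = M * (M * D ^ 2) := by ring
      _ ≤ M ^ k1 * (M + D) ^ k2 := mul_le_mul hA hB (by positivity) (by positivity)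

/-- Per-pair main identity, proved by induction on `k`. -/
lemma pp (k : ℕ) (hk : 3 ≤ k) (m d : ℝ) (hm : 0 < m) (hd : 0 < d) :
    (∑ ν ∈ Finset.Icc 3 k,
        ((ν : ℝ) * ((ν : ℝ) - 1) / 2) / (m ^ (k + 3 - ν) * (m + d) ^ (ν + 1)))
      + ((k : ℝ) * ((k : ℝ) + 1) / 2) / (m ^ 2 * (m + d) ^ (k + 1) * d)
      + ((k : ℝ) + 1) / (m * (m + d) ^ (k + 1) * d ^ 2)
      + 1 / ((m + d) ^ (k + 1) * d ^ 3)
      + 1 / (m ^ (k + 1) * (m + d) ^ 3)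
      = 1 / (m ^ (k + 1) * d ^ 3) := by
  have hn : (0:ℝ) < m + d := by linarith
  induction k, hk using Nat.le_induction with
  | base =>
    rw [Finset.Icc_self, Finset.sum_singleton]
    norm_num
    field_simp
    ring
  | succ k hk ih =>
    rw [Finset.sum_Icc_succ_top (by omega : 3 ≤ k + 1)]
    have hstep : ∀ ν ∈ Finset.Icc 3 k,
        ((ν : ℝ) * ((ν : ℝ) - 1) / 2) / (m ^ (k + 1 + 3 - ν) * (m + d) ^ (ν + 1))
          = (1 / m) * (((ν : ℝ) * ((ν : ℝ) - 1) / 2) / (m ^ (k + 3 - ν) * (m + d) ^ (ν + 1))) := by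
      intro ν hν
      have hν' : ν ≤ k := (Finset.mem_Icc.mp hν).2
      have he : k + 1 + 3 - ν = (k + 3 - ν) + 1 := by omega
      rw [he, pow_succ]
      simp only [div_eq_mul_inv, mul_inv]
      ring
    rw [Finset.sum_congr rfl hstep, ← Finset.mul_sum]
    have hS : (∑ ν ∈ Finset.Icc 3 k,
        ((ν : ℝ) * ((ν : ℝ) - 1) / 2) / (m ^ (k + 3 - ν) * (m + d) ^ (ν + 1)))
        = 1 / (m ^ (k + 1) * d ^ 3)
          - ((k : ℝ) * ((k : ℝ) + 1) / 2) / (m ^ 2 * (m + d) ^ (k + 1) * d)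
          - ((k : ℝ) + 1) / (m * (m + d) ^ (k + 1) * d ^ 2)
          - 1 / ((m + d) ^ (k + 1) * d ^ 3)
          - 1 / (m ^ (k + 1) * (m + d) ^ 3) := by linarith
    rw [hS]
    have hex : k + 1 + 3 - (k + 1) = 3 := by omega
    rw [hex]
    have e1 : (m + d) ^ (k + 1 + 1) = (m + d) ^ (k + 1) * (m + d) := pow_succ _ _
    have e2 : m ^ (k + 1 + 1) = m ^ (k + 1) * m := pow_succ _ _
    push_cast
    rw [e1, e2]
    have hNpos : (0:ℝ) < (m + d) ^ (k + 1) := by positivity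
    have hMpos : (0:ℝ) < m ^ (k + 1) := by positivity
    generalize (m + d) ^ (k + 1) = N at hNpos ⊢
    generalize m ^ (k + 1) = MM at hMpos ⊢
    field_simp
    ring

/-- Partial fraction decomposition `1/(m² n^a d)`. -/
lemma pfII (a : ℕ) (m d : ℝ) (hm : 0 < m) (hd : 0 < d) :
    1 / (m ^ 2 * (m + d) ^ a * d)
      = 1 / (m ^ 2 * (m + d) ^ (a + 1)) + 1 / (m * (m + d) ^ (a + 2))
        + 1 / (d * (m + d) ^ (a + 2)) := by
  have hn : (0:ℝ) < m + d := by linarith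
  have e1 : (m + d) ^ (a + 1) = (m + d) ^ a * (m + d) := pow_succ _ _
  have e2 : (m + d) ^ (a + 2) = (m + d) ^ a * ((m + d) * (m + d)) := by
    rw [pow_succ, pow_succ]; ring
  rw [e1, e2]
  have hNpos : (0:ℝ) < (m + d) ^ a := by positivity
  field_simp
  ring

/-- Partial fraction decomposition `1/(m n^a d²)`. -/
lemma pfIII (a : ℕ) (m d : ℝ) (hm : 0 < m) (hd : 0 < d) :
    1 / (m * (m + d) ^ a * d ^ 2)
      = 1 / (d ^ 2 * (m + d) ^ (a + 1)) + 1 / (d * (m + d) ^ (a + 2))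
        + 1 / (m * (m + d) ^ (a + 2)) := by
  have hn : (0:ℝ) < m + d := by linarith
  have e1 : (m + d) ^ (a + 1) = (m + d) ^ a * (m + d) := pow_succ _ _
  have e2 : (m + d) ^ (a + 2) = (m + d) ^ a * ((m + d) * (m + d)) := by
    rw [pow_succ, pow_succ]; ring
  rw [e1, e2]
  have hNpos : (0:ℝ) < (m + d) ^ a := by positivity
  field_simp
  ring


/-- generic swap of coordinates in a double series -/
lemma tsum_swap' (f : ℕ → ℕ → ℝ) :
    ∑' p : ℕ × ℕ, f p.1 p.2 = ∑' p : ℕ × ℕ, f p.2 p.1 :=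
by
  have h := (Equiv.prodComm ℕ ℕ).tsum_eq (fun p : ℕ × ℕ => f p.2 p.1)
  simpa [Equiv.prodComm] using h

-- w1 e p = 1/(D * N^e), w2 e p = 1/(D^2 * N^e)
noncomputable def w1 (e : ℕ) (p : ℕ × ℕ) : ℝ :=
  1 / (((p.2 : ℝ) + 1) * ((p.1 : ℝ) + 1 + ((p.2 : ℝ) + 1)) ^ e)

noncomputable def w2 (e : ℕ) (p : ℕ × ℕ) : ℝ :=
  1 / (((p.2 : ℝ) + 1) ^ 2 * ((p.1 : ℝ) + 1 + ((p.2 : ℝ) + 1)) ^ e)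

lemma sum_w1 (e : ℕ) : ∑' p, w1 e p = Z 1 e := by
  unfold w1 Z r
  rw [tsum_swap' (fun i j => 1 / (((j : ℝ) + 1) * ((i : ℝ) + 1 + ((j : ℝ) + 1)) ^ e))]
  apply tsum_congr
  intro p
  rw [pow_one]
  ring_nf

lemma sum_w2 (e : ℕ) : ∑' p, w2 e p = Z 2 e := by
  unfold w2 Z r
  rw [tsum_swap' (fun i j => 1 / (((j : ℝ) + 1) ^ 2 * ((i : ℝ) + 1 + ((j : ℝ) + 1)) ^ e))]
  apply tsum_congr
  intro p
  ring_nf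

noncomputable def u1 (a : ℕ) (p : ℕ × ℕ) : ℝ :=
  1 / (((p.1 : ℝ) + 1) ^ a * ((p.2 : ℝ) + 1) ^ 3)

lemma summable_u1 (a : ℕ) (ha : 2 ≤ a) : Summable (u1 a) := by
  unfold u1
  apply summable_den
  intro p
  have hM : (1:ℝ) ≤ (p.1 : ℝ) + 1 := cast_one_le _
  have hD : (1:ℝ) ≤ (p.2 : ℝ) + 1 := cast_one_le _
  exact mul_le_mul (pow_le_pow_right₀ hM ha) (pow_le_pow_right₀ hD (by norm_num))
    (by positivity) (by positivity)

lemma u1_split (a : ℕ) (ha : 2 ≤ a) :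
    ∑' p : ℕ × ℕ, u1 a p = Z a 3 + Z 3 a + ∑' n : ℕ, 1 / ((n : ℝ) + 1) ^ (a + 3) := by
  classical
  set g1 : ℕ × ℕ → ℝ := fun p => if p.1 < p.2 then u1 a p else 0 with hg1
  set g2 : ℕ × ℕ → ℝ := fun p => if p.2 < p.1 then u1 a p else 0 with hg2
  set g3 : ℕ × ℕ → ℝ := fun p => if p.1 = p.2 then u1 a p else 0 with hg3
  have hu : Summable (u1 a) := summable_u1 a ha
  have hu0 : ∀ p, 0 ≤ u1 a p := fun p => by unfold u1; positivity
  have hs1 : Summable g1 := by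
    refine Summable.of_nonneg_of_le (fun p => ?_) (fun p => ?_) hu <;>
      · simp only [hg1]; split <;> simp [hu0]
  have hs2 : Summable g2 := by
    refine Summable.of_nonneg_of_le (fun p => ?_) (fun p => ?_) hu <;>
      · simp only [hg2]; split <;> simp [hu0]
  have hs3 : Summable g3 := by
    refine Summable.of_nonneg_of_le (fun p => ?_) (fun p => ?_) hu <;>
      · simp only [hg3]; split <;> simp [hu0]
  have hdecomp : ∀ p : ℕ × ℕ, u1 a p = g1 p + g2 p + g3 p := by
    intro p
    simp only [hg1, hg2, hg3]
    rcases Nat.lt_trichotomy p.1 p.2 with h | h | h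
    · rw [if_pos h, if_neg (by omega), if_neg (by omega)]; ring
    · rw [if_neg (by omega), if_neg (by omega), if_pos h]; ring
    · rw [if_neg (by omega), if_pos h, if_neg (by omega)]; ring
  have hsum : ∑' p, u1 a p = ∑' p, g1 p + ∑' p, g2 p + ∑' p, g3 p := by
    rw [tsum_congr hdecomp, Summable.tsum_add (hs1.add hs2) hs3, Summable.tsum_add hs1 hs2]
  have e1 : ∑' p, g1 p = Z a 3 := by
    have hinj : Function.Injective (fun q : ℕ × ℕ => (q.1, q.1 + q.2 + 1)) := by
      intro x y h
      simp only [Prod.mk.injEq] at h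
      exact Prod.ext h.1 (by omega)
    have hsupp : Function.support g1 ⊆ Set.range (fun q : ℕ × ℕ => (q.1, q.1 + q.2 + 1)) := by
      intro x hx
      have hlt : x.1 < x.2 := by
        by_contra hc
        apply hx
        simp only [hg1, if_neg hc]
      exact ⟨(x.1, x.2 - x.1 - 1), by ext <;> simp <;> omega⟩
    have := hinj.tsum_eq hsupp
    rw [← this]
    unfold Z
    apply tsum_congr
    intro q
    simp only [hg1]
    rw [if_pos (by omega)]
    unfold u1 r
    push_cast
    ring_nf
  have e2 : ∑' p, g2 p = Z 3 a := by
    have hinj : Function.Injective (fun q : ℕ × ℕ => (q.1 + q.2 + 1, q.1)) := by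
      intro x y h
      simp only [Prod.mk.injEq] at h
      exact Prod.ext h.2 (by omega)
    have hsupp : Function.support g2 ⊆ Set.range (fun q : ℕ × ℕ => (q.1 + q.2 + 1, q.1)) := by
      intro x hx
      have hlt : x.2 < x.1 := by
        by_contra hc
        apply hx
        simp only [hg2, if_neg hc]
      exact ⟨(x.2, x.1 - x.2 - 1), by ext <;> simp <;> omega⟩
    have := hinj.tsum_eq hsupp
    rw [← this]
    unfold Z
    apply tsum_congr
    intro q
    simp only [hg2]
    rw [if_pos (by omega)]
    unfold u1 r
    push_cast
    ring_nf
  have e3 : ∑' p, g3 p = ∑' n : ℕ, 1 / ((n : ℝ) + 1) ^ (a + 3) := by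
    have hinj : Function.Injective (fun n : ℕ => ((n, n) : ℕ × ℕ)) := by
      intro x y h
      exact congrArg Prod.fst h
    have hsupp : Function.support g3 ⊆ Set.range (fun n : ℕ => ((n, n) : ℕ × ℕ)) := by
      intro x hx
      have hlt : x.1 = x.2 := by
        by_contra hc
        apply hx
        simp only [hg3, if_neg hc]
      exact ⟨x.1, by ext <;> simp [hlt]⟩
    have := hinj.tsum_eq hsupp
    rw [← this]
    apply tsum_congr
    intro n
    simp only [hg3, if_pos rfl]
    unfold u1
    rw [pow_add]
  rw [hsum, e1, e2, e3]

noncomputable def u4 (a : ℕ) (p : ℕ × ℕ) : ℝ :=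
  1 / (((p.1 : ℝ) + 1) ^ 2 * ((p.1 : ℝ) + 1 + ((p.2 : ℝ) + 1)) ^ a * ((p.2 : ℝ) + 1))

noncomputable def u5 (a : ℕ) (p : ℕ × ℕ) : ℝ :=
  1 / (((p.1 : ℝ) + 1) * ((p.1 : ℝ) + 1 + ((p.2 : ℝ) + 1)) ^ a * ((p.2 : ℝ) + 1) ^ 2)

noncomputable def u6 (a : ℕ) (p : ℕ × ℕ) : ℝ :=
  1 / (((p.1 : ℝ) + 1 + ((p.2 : ℝ) + 1)) ^ a * ((p.2 : ℝ) + 1) ^ 3)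

lemma summable_w1 {e : ℕ} (he : 3 ≤ e) : Summable (w1 e) := by
  unfold w1
  apply summable_den
  intro p
  have hM : (1:ℝ) ≤ (p.1 : ℝ) + 1 := cast_one_le _
  have hD : (1:ℝ) ≤ (p.2 : ℝ) + 1 := cast_one_le _
  set M : ℝ := (p.1 : ℝ) + 1
  set D : ℝ := (p.2 : ℝ) + 1
  have hN : (1:ℝ) ≤ M + D := by linarith
  have hM0 : (0:ℝ) ≤ M := by linarith
  have hD0 : (0:ℝ) ≤ D := by linarith
  have h1 : M ^ 2 * D ≤ (M + D) ^ 3 := by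
    nlinarith [mul_nonneg (mul_nonneg hM0 hM0) hM0, mul_nonneg (mul_nonneg hM0 hD0) hD0,
      mul_nonneg (mul_nonneg hD0 hD0) hD0, mul_nonneg (mul_nonneg hM0 hM0) hD0]
  have h2 : (M + D) ^ 3 ≤ (M + D) ^ e := pow_le_pow_right₀ hN he
  calc M ^ 2 * D ^ 2 = D * (M ^ 2 * D) := by ring
    _ ≤ D * (M + D) ^ e := mul_le_mul_of_nonneg_left (h1.trans h2) hD0

lemma summable_w2 {e : ℕ} (he : 2 ≤ e) : Summable (w2 e) := by
  unfold w2
  apply summable_den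
  intro p
  have hM : (1:ℝ) ≤ (p.1 : ℝ) + 1 := cast_one_le _
  have hD : (1:ℝ) ≤ (p.2 : ℝ) + 1 := cast_one_le _
  set M : ℝ := (p.1 : ℝ) + 1
  set D : ℝ := (p.2 : ℝ) + 1
  have hN : (1:ℝ) ≤ M + D := by linarith
  have h1 : M ^ 2 ≤ (M + D) ^ 2 := by nlinarith
  have h2 : (M + D) ^ 2 ≤ (M + D) ^ e := pow_le_pow_right₀ hN he
  calc M ^ 2 * D ^ 2 = D ^ 2 * M ^ 2 := by ring
    _ ≤ D ^ 2 * (M + D) ^ e :=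
        mul_le_mul_of_nonneg_left (h1.trans h2) (by positivity)

lemma summable_u4 {a : ℕ} (ha : 1 ≤ a) : Summable (u4 a) := by
  unfold u4
  apply summable_den
  intro p
  have hM : (1:ℝ) ≤ (p.1 : ℝ) + 1 := cast_one_le _
  have hD : (1:ℝ) ≤ (p.2 : ℝ) + 1 := cast_one_le _
  set M : ℝ := (p.1 : ℝ) + 1
  set D : ℝ := (p.2 : ℝ) + 1
  have hN : (1:ℝ) ≤ M + D := by linarith
  have h1 : D ≤ (M + D) ^ a := by
    calc D ≤ M + D := by linarith
      _ ≤ (M + D) ^ a := le_self_pow₀ hN (by omega)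
  calc M ^ 2 * D ^ 2 = M ^ 2 * D * D := by ring
    _ ≤ M ^ 2 * D * (M + D) ^ a :=
        mul_le_mul_of_nonneg_left h1 (by positivity)
    _ = M ^ 2 * (M + D) ^ a * D := by ring
lemma summable_u5 {a : ℕ} (ha : 1 ≤ a) : Summable (u5 a) := by
  unfold u5
  apply summable_den
  intro p
  have hM : (1:ℝ) ≤ (p.1 : ℝ) + 1 := cast_one_le _
  have hD : (1:ℝ) ≤ (p.2 : ℝ) + 1 := cast_one_le _
  set M : ℝ := (p.1 : ℝ) + 1
  set D : ℝ := (p.2 : ℝ) + 1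
  have hN : (1:ℝ) ≤ M + D := by linarith
  have h1 : M ≤ (M + D) ^ a := by
    calc M ≤ M + D := by linarith
      _ ≤ (M + D) ^ a := le_self_pow₀ hN (by omega)
  calc M ^ 2 * D ^ 2 = M * D ^ 2 * M := by ring
    _ ≤ M * D ^ 2 * (M + D) ^ a :=
        mul_le_mul_of_nonneg_left h1 (by positivity)
    _ = M * (M + D) ^ a * D ^ 2 := by ring

lemma summable_u6 {a : ℕ} (ha : 2 ≤ a) : Summable (u6 a) := by
  unfold u6
  apply summable_den
  intro p
  have hM : (1:ℝ) ≤ (p.1 : ℝ) + 1 := cast_one_le _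
  have hD : (1:ℝ) ≤ (p.2 : ℝ) + 1 := cast_one_le _
  set M : ℝ := (p.1 : ℝ) + 1
  set D : ℝ := (p.2 : ℝ) + 1
  have hN : (1:ℝ) ≤ M + D := by linarith
  have h1 : M ^ 2 ≤ (M + D) ^ a := by
    calc M ^ 2 ≤ (M + D) ^ 2 := by nlinarith
      _ ≤ (M + D) ^ a := pow_le_pow_right₀ hN ha
  have hD23 : D ^ 2 ≤ D ^ 3 := pow_le_pow_right₀ hD (by omega)
  calc M ^ 2 * D ^ 2 ≤ (M + D) ^ a * D ^ 2 :=
        mul_le_mul_of_nonneg_right h1 (by positivity)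
    _ ≤ (M + D) ^ a * D ^ 3 := mul_le_mul_of_nonneg_left hD23 (by positivity)

lemma sum_u4 {a : ℕ} (ha : 2 ≤ a) : ∑' p, u4 a p = Z 2 (a + 1) + 2 * Z 1 (a + 2) := by
  have hpp : ∀ p : ℕ × ℕ, u4 a p = r 2 (a + 1) p + r 1 (a + 2) p + w1 (a + 2) p := by
    intro p
    unfold u4 r w1
    simpa [pow_one] using
      pfII a ((p.1 : ℝ) + 1) ((p.2 : ℝ) + 1) (by positivity) (by positivity)
  have h2 : Summable (r 2 (a + 1)) := summable_r (by omega) (by omega) (Or.inl (by omega))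
  have h1 : Summable (r 1 (a + 2)) := summable_r (by omega) (by omega) (Or.inr (by omega))
  have hw : Summable (w1 (a + 2)) := summable_w1 (by omega)
  rw [tsum_congr hpp, Summable.tsum_add (h2.add h1) hw, Summable.tsum_add h2 h1, sum_w1]
  show Z 2 (a+1) + Z 1 (a+2) + Z 1 (a+2) = _
  ring

lemma sum_u5 {a : ℕ} (ha : 2 ≤ a) : ∑' p, u5 a p = Z 2 (a + 1) + 2 * Z 1 (a + 2) := by
  have hpp : ∀ p : ℕ × ℕ, u5 a p = w2 (a + 1) p + w1 (a + 2) p + r 1 (a + 2) p := by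
    intro p
    unfold u5 r w1 w2
    simpa [pow_one] using
      pfIII a ((p.1 : ℝ) + 1) ((p.2 : ℝ) + 1) (by positivity) (by positivity)
  have h2 : Summable (w2 (a + 1)) := summable_w2 (by omega)
  have h1 : Summable (r 1 (a + 2)) := summable_r (by omega) (by omega) (Or.inr (by omega))
  have hw : Summable (w1 (a + 2)) := summable_w1 (by omega)
  rw [tsum_congr hpp, Summable.tsum_add (h2.add hw) h1, Summable.tsum_add h2 hw, sum_w1, sum_w2]
  show Z 2 (a+1) + Z 1 (a+2) + Z 1 (a+2) = _
  ring

lemma sum_u6 (a : ℕ) : ∑' p, u6 a p = Z 3 a := by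
  unfold u6 Z r
  rw [tsum_swap' (fun i j => 1 / (((i : ℝ) + 1 + ((j : ℝ) + 1)) ^ a * ((j : ℝ) + 1) ^ 3))]
  apply tsum_congr
  intro p
  ring_nf

lemma key (k : ℕ) (hk : 3 ≤ k) :
    (∑ ν ∈ Finset.Icc 3 k, ((ν : ℝ) * ((ν : ℝ) - 1) / 2) * Z (k + 3 - ν) (ν + 1))
      + ((k : ℝ) + 1) * ((k : ℝ) + 2) / 2 * Z 2 (k + 2)
      + ((k : ℝ) + 1) * ((k : ℝ) + 2) * Z 1 (k + 3)
      = ∑' n : ℕ, 1 / ((n : ℝ) + 1) ^ (k + 4) := by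
  have hppAll : ∀ p : ℕ × ℕ,
      (∑ ν ∈ Finset.Icc 3 k, ((ν : ℝ) * ((ν : ℝ) - 1) / 2) * r (k + 3 - ν) (ν + 1) p)
        + ((k : ℝ) * ((k : ℝ) + 1) / 2) * u4 (k + 1) p
        + ((k : ℝ) + 1) * u5 (k + 1) p
        + u6 (k + 1) p + r (k + 1) 3 p = u1 (k + 1) p := by
    intro p
    have h := pp k hk ((p.1 : ℝ) + 1) ((p.2 : ℝ) + 1) (by positivity) (by positivity)
    unfold r u4 u5 u6 u1
    simp only [mul_one_div]
    exact h
  have hSnu : ∀ ν ∈ Finset.Icc 3 k,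
      Summable (fun p => ((ν : ℝ) * ((ν : ℝ) - 1) / 2) * r (k + 3 - ν) (ν + 1) p) := by
    intro ν hν
    have hm := Finset.mem_Icc.mp hν
    exact (summable_r (by omega) (by omega) (Or.inl (by omega))).mul_left _
  have hS : Summable (fun p : ℕ × ℕ =>
      ∑ ν ∈ Finset.Icc 3 k, ((ν : ℝ) * ((ν : ℝ) - 1) / 2) * r (k + 3 - ν) (ν + 1) p) :=
    summable_sum hSnu
  have hS4 : Summable (u4 (k + 1)) := summable_u4 (by omega)
  have hS4' := hS4.mul_left ((k : ℝ) * ((k : ℝ) + 1) / 2)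
  have hS5 : Summable (u5 (k + 1)) := summable_u5 (by omega)
  have hS5' := hS5.mul_left ((k : ℝ) + 1)
  have hS6 : Summable (u6 (k + 1)) := summable_u6 (by omega)
  have hSr13 : Summable (r (k + 1) 3) := summable_r (by omega) (by omega) (Or.inl (by omega))
  have ht := tsum_congr (L := SummationFilter.unconditional _) hppAll
  rw [Summable.tsum_add (((hS.add hS4').add hS5').add hS6) hSr13,
      Summable.tsum_add ((hS.add hS4').add hS5') hS6,
      Summable.tsum_add (hS.add hS4') hS5',
      Summable.tsum_add hS hS4', Summable.tsum_finsetSum hSnu] at ht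
  simp only [tsum_mul_left] at ht
  rw [sum_u4 (by omega), sum_u5 (by omega), sum_u6, u1_split (k + 1) (by omega)] at ht
  have hZ : ∀ k1 k2 : ℕ, (∑' p : ℕ × ℕ, r k1 k2 p) = Z k1 k2 := fun _ _ => rfl
  simp only [hZ] at ht
  have e1 : k + 1 + 1 = k + 2 := by omega
  have e2 : k + 1 + 2 = k + 3 := by omega
  have e3 : k + 1 + 3 = k + 4 := by omega
  rw [e1, e2, e3] at ht
  linear_combination ht

lemma zeta2_ofReal (k1 k2 : ℕ) : zeta2 k1 k2 = ((Z k1 k2 : ℝ) : ℂ) := by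
  unfold zeta2 Z r
  rw [Complex.ofReal_tsum]
  apply tsum_congr
  intro p
  push_cast
  ring

end DZ

theorem second_derivative_sum_formula (k : ℕ) (hk : 3 ≤ k) :
    (∑ ν ∈ Finset.Icc 3 k, ((ν : ℂ) * ((ν : ℂ) - 1) / 2) * zeta2 (k + 3 - ν) (ν + 1))
      + (((k : ℂ) + 1) * ((k : ℂ) + 2) / 2) * zeta2 2 (k + 2)
      + ((k : ℂ) + 1) * ((k : ℂ) + 2) * zeta2 1 (k + 3)
      = riemannZeta (k + 4) := by
  have hzeta : riemannZeta ((k : ℂ) + 4)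
      = ((∑' n : ℕ, 1 / ((n : ℝ) + 1) ^ (k + 4) : ℝ) : ℂ) := by
    have hre : 1 < ((k : ℂ) + 4).re := by
      simp only [Complex.add_re, Complex.natCast_re]
      have : (0:ℝ) ≤ (k:ℝ) := Nat.cast_nonneg k
      have h4 : ((4:ℂ)).re = 4 := by norm_num
      rw [h4]
      linarith
    rw [zeta_eq_tsum_one_div_nat_add_one_cpow hre, Complex.ofReal_tsum]
    apply tsum_congr
    intro n
    have hcast : ((k : ℂ) + 4) = ((k + 4 : ℕ) : ℂ) := by push_cast; ring
    rw [hcast, Complex.cpow_natCast]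
    push_cast
    ring
  rw [hzeta, ← DZ.key k hk]
  simp only [DZ.zeta2_ofReal]
  push_cast
  ring
end

section
/- The double series ∑_{m,n≥0} 1/((n+1/2)(m+n+1)²) converges and equals (7/2) ζ(3). -/
open scoped BigOperators
open Filter Finset

namespace DSH

noncomputable def u (n : ℕ) : ℝ := 1 / (((n:ℝ)+1) * Real.sqrt ((n:ℝ)+1))

noncomputable def fS (p : ℕ × ℕ) : ℝ := 1 / (((p.2 : ℝ) + 1 / 2) * ((p.1 : ℝ) + (p.2 : ℝ) + 1) ^ 2)
noncomputable def fT (p : ℕ × ℕ) : ℝ :=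
  1 / (((p.1 : ℝ) + 1/2) * (((p.2 : ℝ) + 1/2) * ((p.1 : ℝ) + (p.2 : ℝ) + 1)))
noncomputable def fB (p : ℕ × ℕ) : ℝ :=
  1 / (((p.1 : ℝ) + 1) * (((p.2 : ℝ) + 1/2) * ((p.1 : ℝ) + (p.2 : ℝ) + 3/2)))
noncomputable def fA (p : ℕ × ℕ) : ℝ :=
  1 / (((p.1 : ℝ) + 1) * (((p.2 : ℝ) + 1) * ((p.1 : ℝ) + (p.2 : ℝ) + 2)))
noncomputable def hA (p : ℕ × ℕ) : ℝ := 1 / (((p.1 : ℝ) + 1) * ((p.1 : ℝ) + (p.2 : ℝ) + 2) ^ 2)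
noncomputable def FS (q : ℕ × ℕ) : ℝ :=
  if q.2 < q.1 then 1 / (((q.2 : ℝ) + 1/2) * (q.1 : ℝ) ^ 2) else 0
noncomputable def FA (q : ℕ × ℕ) : ℝ :=
  if q.2 + 1 < q.1 then 1 / (((q.2 : ℝ) + 1) * (q.1 : ℝ) ^ 2) else 0

noncomputable def W (k : ℕ) : ℝ := ∑ n ∈ range k, 1/(((n:ℝ)+1/2) * (k:ℝ)^2)
noncomputable def Pfull (k : ℕ) : ℝ := ∑ m ∈ range k, 1/(((m:ℝ)+1) * (k:ℝ)^2)
noncomputable def Pm (k : ℕ) : ℝ := ∑ m ∈ range (k-1), 1/(((m:ℝ)+1) * (k:ℝ)^2)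

lemma fS_nonneg (p : ℕ × ℕ) : 0 ≤ fS p := by unfold fS; positivity
lemma fT_nonneg (p : ℕ × ℕ) : 0 ≤ fT p := by unfold fT; positivity
lemma fB_nonneg (p : ℕ × ℕ) : 0 ≤ fB p := by unfold fB; positivity
lemma fA_nonneg (p : ℕ × ℕ) : 0 ≤ fA p := by unfold fA; positivity
lemma FS_nonneg (q : ℕ × ℕ) : 0 ≤ FS q := by
  unfold FS; split_ifs with h; · positivity
  · exact le_refl 0
lemma FA_nonneg (q : ℕ × ℕ) : 0 ≤ FA q := by
  unfold FA; split_ifs with h; · positivity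
  · exact le_refl 0

lemma u_nonneg (n : ℕ) : 0 ≤ u n := by unfold u; positivity

lemma summable_u : Summable u := by
  have h0 : Summable (fun n : ℕ => 1 / (n : ℝ) ^ ((3:ℝ)/2)) :=
    Real.summable_one_div_nat_rpow.mpr (by norm_num)
  have h1 : Summable (fun n : ℕ => 1 / ((n : ℝ)+1) ^ ((3:ℝ)/2)) := by
    have := (summable_nat_add_iff 1).mpr h0
    simpa [Nat.cast_add] using this
  refine h1.congr fun n => ?_
  have hx : (0:ℝ) < (n:ℝ)+1 := by positivity
  rw [u]
  congr 1
  rw [show ((3:ℝ)/2) = 1 + 1/2 by norm_num, Real.rpow_add hx, Real.rpow_one,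
    Real.sqrt_eq_rpow]

lemma summable_master : Summable (fun p : ℕ × ℕ => u p.1 * u p.2) :=
  summable_u.mul_of_nonneg summable_u u_nonneg u_nonneg

lemma summable_of_bound (f : ℕ × ℕ → ℝ) (C : ℝ)
    (h0 : ∀ p, 0 ≤ f p) (h : ∀ p : ℕ × ℕ, f p ≤ C * (u p.1 * u p.2)) : Summable f :=
  Summable.of_nonneg_of_le h0 h (summable_master.mul_left C)

lemma sqrt_sq' {x : ℝ} (hx : 0 ≤ x) : Real.sqrt x * Real.sqrt x = x := Real.mul_self_sqrt hx

lemma sqrt_mul_le {a b : ℝ} (ha : 1 ≤ a) (hb : 1 ≤ b) :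
    Real.sqrt a * Real.sqrt b ≤ a + b - 1 := by
  nlinarith [sqrt_sq' (by linarith : (0:ℝ) ≤ a), sqrt_sq' (by linarith : (0:ℝ) ≤ b),
    Real.sqrt_nonneg a, Real.sqrt_nonneg b,
    Real.one_le_sqrt.mpr ha, Real.one_le_sqrt.mpr hb,
    sq_nonneg (Real.sqrt a - Real.sqrt b), sq_nonneg (Real.sqrt a * Real.sqrt b - 1)]

lemma le_bound {D C : ℝ} (hD : 0 < D) (m n : ℕ)
    (h : (((m:ℝ)+1) * Real.sqrt ((m:ℝ)+1)) * ((((n:ℝ)+1) * Real.sqrt ((n:ℝ)+1))) ≤ C * D) :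
    1 / D ≤ C * (u m * u n) := by
  unfold u
  rw [div_mul_div_comm, one_mul, mul_one_div, div_le_div_iff₀ hD (by positivity), one_mul]
  linarith

lemma ineq_S {a b : ℝ} (ha1 : 1 ≤ a) (hb1 : 1 ≤ b) :
    a * Real.sqrt a * (b * Real.sqrt b) ≤ 2 * ((b - 1/2) * (a + b - 1) ^ 2) := by
  have hkey := sqrt_mul_le ha1 hb1
  have hsa := Real.sqrt_nonneg a
  have hsb := Real.sqrt_nonneg b
  have h3 : a * (Real.sqrt a * Real.sqrt b) ≤ (a+b-1)^2 := by
    rw [sq]; exact mul_le_mul (by linarith) hkey (by positivity) (by linarith)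
  nlinarith [mul_le_mul_of_nonneg_left h3 (show (0:ℝ) ≤ b by linarith),
    mul_nonneg (show (0:ℝ) ≤ b-1 by linarith) (sq_nonneg (a+b-1))]

lemma ineq_T {a b : ℝ} (ha1 : 1 ≤ a) (hb1 : 1 ≤ b) :
    a * Real.sqrt a * (b * Real.sqrt b) ≤ 4 * ((a - 1/2) * ((b - 1/2) * (a + b - 1))) := by
  have hkey := sqrt_mul_le ha1 hb1
  have hsa := Real.sqrt_nonneg a
  have hsb := Real.sqrt_nonneg b
  have h3 : (a*b) * (Real.sqrt a * Real.sqrt b) ≤ (a*b) * (a+b-1) :=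
    mul_le_mul_of_nonneg_left hkey (by nlinarith)
  nlinarith [mul_nonneg (mul_nonneg (show (0:ℝ) ≤ a-1 by linarith)
    (show (0:ℝ) ≤ b-1 by linarith)) (show (0:ℝ) ≤ a+b-1 by linarith), sq_nonneg ((a-1)*(b-1))]

lemma ineq_B {a b : ℝ} (ha1 : 1 ≤ a) (hb1 : 1 ≤ b) :
    a * Real.sqrt a * (b * Real.sqrt b) ≤ 2 * (a * ((b - 1/2) * (a + b - 1/2))) := by
  have hkey := sqrt_mul_le ha1 hb1
  have hsa := Real.sqrt_nonneg a
  have hsb := Real.sqrt_nonneg b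
  have h3 : (a*b) * (Real.sqrt a * Real.sqrt b) ≤ (a*b) * (a+b-1) :=
    mul_le_mul_of_nonneg_left hkey (by nlinarith)
  nlinarith [mul_nonneg (mul_nonneg (show (0:ℝ) ≤ a by linarith)
    (show (0:ℝ) ≤ b-1 by linarith)) (show (0:ℝ) ≤ a+b-1 by linarith)]

lemma ineq_A {a b : ℝ} (ha1 : 1 ≤ a) (hb1 : 1 ≤ b) :
    a * Real.sqrt a * (b * Real.sqrt b) ≤ 1 * (a * (b * (a + b))) := by
  have hkey := sqrt_mul_le ha1 hb1
  have h3 : (a*b) * (Real.sqrt a * Real.sqrt b) ≤ (a*b) * (a+b-1) :=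
    mul_le_mul_of_nonneg_left hkey (by nlinarith)
  nlinarith [mul_pos (show (0:ℝ) < a by linarith) (show (0:ℝ) < b by linarith)]

lemma ineq_ind {k b : ℝ} (hk1 : 1 ≤ k) (hb1 : 1 ≤ b) (hbk : b ≤ k) :
    (k+1) * Real.sqrt (k+1) * (b * Real.sqrt b) ≤ 4 * (b * k ^ 2) := by
  have hsk := Real.sqrt_nonneg k
  have hsb := Real.sqrt_nonneg b
  have hsk2 := sqrt_sq' (by linarith : (0:ℝ) ≤ k)
  have h1 : Real.sqrt (k+1) ≤ Real.sqrt k + 1 := by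
    nlinarith [sqrt_sq' (show (0:ℝ) ≤ k+1 by linarith), Real.sqrt_nonneg (k+1),
      sq_nonneg (Real.sqrt (k+1) - (Real.sqrt k + 1))]
  have h2 : Real.sqrt b ≤ Real.sqrt k := Real.sqrt_le_sqrt hbk
  have hsk1 : 1 ≤ Real.sqrt k := Real.one_le_sqrt.mpr hk1
  have h4 : (k+1) * Real.sqrt (k+1) ≤ (2*k) * (2*Real.sqrt k) := by
    have := mul_le_mul (show k+1 ≤ 2*k by linarith)
      (show Real.sqrt (k+1) ≤ 2*Real.sqrt k by linarith) (Real.sqrt_nonneg _) (by linarith)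
    linarith
  have h5 : b * Real.sqrt b ≤ b * Real.sqrt k := mul_le_mul_of_nonneg_left h2 (by linarith)
  have h6 : (k+1) * Real.sqrt (k+1) * (b * Real.sqrt b)
      ≤ (2*k) * (2*Real.sqrt k) * (b * Real.sqrt k) :=
    mul_le_mul h4 h5 (by positivity) (by positivity)
  have h7 : 2*k*(2*Real.sqrt k)*(b*Real.sqrt k) = 4*(b*k^2) := by
    rw [sq]; linear_combination (4*k*b) * hsk2
  linarith

lemma one_le_cast_add_one (m : ℕ) : (1:ℝ) ≤ (m:ℝ)+1 := by
  have : (0:ℝ) ≤ (m:ℝ) := Nat.cast_nonneg m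
  linarith

lemma summable_fS : Summable fS := by
  refine summable_of_bound _ 2 fS_nonneg (fun p => ?_)
  obtain ⟨m, n⟩ := p
  unfold fS
  simp only
  exact le_bound (by positivity) m n
    ((ineq_S (one_le_cast_add_one m) (one_le_cast_add_one n)).trans_eq (by ring))

lemma summable_fT : Summable fT := by
  refine summable_of_bound _ 4 fT_nonneg (fun p => ?_)
  obtain ⟨m, n⟩ := p
  unfold fT
  simp only
  exact le_bound (by positivity) m n
    ((ineq_T (one_le_cast_add_one m) (one_le_cast_add_one n)).trans_eq (by ring))

lemma summable_fB : Summable fB := by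
  refine summable_of_bound _ 2 fB_nonneg (fun p => ?_)
  obtain ⟨m, n⟩ := p
  unfold fB
  simp only
  exact le_bound (by positivity) m n
    ((ineq_B (one_le_cast_add_one m) (one_le_cast_add_one n)).trans_eq (by ring))

lemma summable_fA : Summable fA := by
  refine summable_of_bound _ 1 fA_nonneg (fun p => ?_)
  obtain ⟨m, n⟩ := p
  unfold fA
  simp only
  exact le_bound (by positivity) m n
    ((ineq_A (one_le_cast_add_one m) (one_le_cast_add_one n)).trans_eq (by ring))

lemma summable_FS : Summable FS := by
  refine summable_of_bound _ 8 FS_nonneg (fun q => ?_)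
  obtain ⟨k, n⟩ := q
  unfold FS
  simp only
  split_ifs with h
  · have hk1 : (1:ℝ) ≤ (k:ℝ) := by
      have : 1 ≤ k := Nat.one_le_iff_ne_zero.mpr (by omega)
      exact_mod_cast this
    have hbk : ((n:ℝ)+1) ≤ (k:ℝ) := by exact_mod_cast Nat.succ_le_of_lt h
    refine le_bound (by positivity) k n ?_
    have base := ineq_ind hk1 (one_le_cast_add_one n) hbk
    have hnn : (0:ℝ) ≤ (n:ℝ) * (k:ℝ)^2 := mul_nonneg (Nat.cast_nonneg n) (sq_nonneg _)
    linarith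
  · exact mul_nonneg (by norm_num) (mul_nonneg (u_nonneg _) (u_nonneg _))

lemma summable_FA : Summable FA := by
  refine summable_of_bound _ 4 FA_nonneg (fun q => ?_)
  obtain ⟨k, n⟩ := q
  unfold FA
  simp only
  split_ifs with h
  · have hk1 : (1:ℝ) ≤ (k:ℝ) := by
      have : 1 ≤ k := by omega
      exact_mod_cast this
    have hbk : ((n:ℝ)+1) ≤ (k:ℝ) := by
      have : n + 1 ≤ k := by omega
      exact_mod_cast this
    exact le_bound (by positivity) k n (ineq_ind hk1 (one_le_cast_add_one n) hbk)
  · exact mul_nonneg (by norm_num) (mul_nonneg (u_nonneg _) (u_nonneg _))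

/-! ### Telescoping -/

lemma hasSum_sub_shift {f : ℕ → ℝ} (hmono : ∀ i j, i ≤ j → f j ≤ f i)
    (h0 : Tendsto f atTop (nhds 0)) (k : ℕ) :
    HasSum (fun n => f n - f (n + k)) (∑ i ∈ range k, f i) := by
  rw [hasSum_iff_tendsto_nat_of_nonneg
    (fun n => sub_nonneg.2 (hmono n (n+k) (Nat.le_add_right n k)))]
  have key : ∀ N : ℕ, ∑ n ∈ range N, (f n - f (n+k)) =
      ∑ i ∈ range k, f i - ∑ i ∈ range k, f (N + i) := by
    intro N
    rw [Finset.sum_sub_distrib]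
    have e1 : ∑ n ∈ range N, f (n+k) = ∑ i ∈ range (k + N), f i - ∑ i ∈ range k, f i := by
      rw [Finset.sum_range_add f k N]
      simp [add_comm]
    have e2 : ∑ i ∈ range (k + N), f i = ∑ i ∈ range N, f i + ∑ i ∈ range k, f (N + i) := by
      rw [add_comm k N, Finset.sum_range_add f N k]
    rw [e1, e2]
    ring
  simp only [key]
  have hlim : Tendsto (fun N => ∑ i ∈ range k, f (N + i)) atTop (nhds 0) := by
    have : Tendsto (fun N => ∑ i ∈ range k, f (N + i)) atTop (nhds (∑ i ∈ range k, (0:ℝ))) := by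
      refine tendsto_finset_sum _ (fun i _ => ?_)
      exact h0.comp (tendsto_add_atTop_nat i)
    simpa using this
  have := (tendsto_const_nhds (x := (∑ i ∈ range k, f i)) (f := atTop (α := ℕ))).sub hlim
  simpa using this

lemma tendsto_g_half : Tendsto (fun n : ℕ => 1/((n:ℝ)+1/2)) atTop (nhds 0) := by
  have h1 : Tendsto (fun n : ℕ => (n:ℝ)+1/2) atTop atTop :=
    tendsto_atTop_add_const_right atTop (1/2) tendsto_natCast_atTop_atTop
  simpa [one_div, Pi.inv_def] using h1.inv_tendsto_atTop

lemma tendsto_g_one : Tendsto (fun n : ℕ => 1/((n:ℝ)+1)) atTop (nhds 0) := by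
  have h1 : Tendsto (fun n : ℕ => (n:ℝ)+1) atTop atTop :=
    tendsto_atTop_add_const_right atTop 1 tendsto_natCast_atTop_atTop
  simpa [one_div, Pi.inv_def] using h1.inv_tendsto_atTop

lemma mono_g_half : ∀ i j : ℕ, i ≤ j → 1/((j:ℝ)+1/2) ≤ 1/((i:ℝ)+1/2) := by
  intro i j hij
  have : ((i:ℝ)+1/2) ≤ ((j:ℝ)+1/2) := by
    have : (i:ℝ) ≤ (j:ℝ) := Nat.cast_le.mpr hij
    linarith
  exact one_div_le_one_div_of_le (by positivity) this

lemma mono_g_one : ∀ i j : ℕ, i ≤ j → 1/((j:ℝ)+1) ≤ 1/((i:ℝ)+1) := by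
  intro i j hij
  have : ((i:ℝ)+1) ≤ ((j:ℝ)+1) := by
    have : (i:ℝ) ≤ (j:ℝ) := Nat.cast_le.mpr hij
    linarith
  exact one_div_le_one_div_of_le (by positivity) this

lemma inner_B (m : ℕ) : HasSum (fun n => fB (m, n)) (W (m+1)) := by
  have h := (hasSum_sub_shift mono_g_half tendsto_g_half (m+1)).div_const (((m:ℝ)+1)^2)
  have he : ∀ n : ℕ, (1/((n:ℝ)+1/2) - 1/(((n + (m+1) : ℕ):ℝ)+1/2)) / ((m:ℝ)+1)^2
      = fB (m, n) := by
    intro n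
    unfold fB
    simp only
    push_cast
    have d1 : ((n:ℝ)+1/2) ≠ 0 := by positivity
    have d2 : ((n:ℝ)+(m:ℝ)+1+1/2) ≠ 0 := by positivity
    have d3 : ((m:ℝ)+1) ≠ 0 := by positivity
    field_simp
    ring
  have hW : (∑ i ∈ range (m+1), 1/((i:ℝ)+1/2)) / ((m:ℝ)+1)^2 = W (m+1) := by
    unfold W
    rw [Finset.sum_div]
    refine Finset.sum_congr rfl fun n _ => ?_
    push_cast
    rw [div_div, one_div, one_div]
  rw [← hW]
  exact h.congr_fun fun n => (he n).symm

lemma inner_A (m : ℕ) : HasSum (fun n => fA (m, n)) (Pfull (m+1)) := by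
  have h := (hasSum_sub_shift mono_g_one tendsto_g_one (m+1)).div_const (((m:ℝ)+1)^2)
  have he : ∀ n : ℕ, (1/((n:ℝ)+1) - 1/(((n + (m+1) : ℕ):ℝ)+1)) / ((m:ℝ)+1)^2
      = fA (m, n) := by
    intro n
    unfold fA
    simp only
    push_cast
    have d1 : ((n:ℝ)+1) ≠ 0 := by positivity
    have d2 : ((n:ℝ)+(m:ℝ)+1+1) ≠ 0 := by positivity
    have d3 : ((m:ℝ)+1) ≠ 0 := by positivity
    field_simp
    ring
  have hP : (∑ i ∈ range (m+1), 1/((i:ℝ)+1)) / ((m:ℝ)+1)^2 = Pfull (m+1) := by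
    unfold Pfull
    rw [Finset.sum_div]
    refine Finset.sum_congr rfl fun n _ => ?_
    push_cast
    rw [div_div]
  rw [← hP]
  exact h.congr_fun fun n => (he n).symm

/-! ### Triangular reindexing -/

lemma jS_inj : Function.Injective (fun p : ℕ × ℕ => ((p.1+p.2+1, p.2) : ℕ × ℕ)) := by
  intro p q hpq
  simp only [Prod.ext_iff] at hpq ⊢
  omega

lemma FS_comp (p : ℕ × ℕ) : FS (p.1+p.2+1, p.2) = fS p := by
  obtain ⟨m, n⟩ := p
  unfold FS fS
  simp only
  rw [if_pos (by omega)]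
  push_cast
  ring_nf

lemma FS_row (k : ℕ) : ∑' n, FS (k, n) = W k := by
  rw [tsum_eq_sum (s := range k) (fun n hn => by
    unfold FS; simp only; rw [if_neg (by simpa using hn)])]
  exact Finset.sum_congr rfl fun n hn => by
    unfold FS; simp only; rw [if_pos (mem_range.mp hn)]

lemma triangle_S : ∑' p : ℕ × ℕ, fS p = ∑' k, W k := by
  have hsupp : Function.support FS ⊆ Set.range (fun p : ℕ × ℕ => ((p.1+p.2+1, p.2) : ℕ × ℕ)) := by
    rintro ⟨k, n⟩ h
    have hnk : n < k := by
      by_contra hc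
      exact h (by unfold FS; simp only; rw [if_neg hc])
    exact ⟨(k-n-1, n), by dsimp only; simp only [Prod.mk.injEq, and_true]; omega⟩
  have h1 : ∑' p : ℕ × ℕ, FS ((p.1+p.2+1, p.2) : ℕ × ℕ) = ∑' q : ℕ × ℕ, FS q :=
    jS_inj.tsum_eq hsupp
  have h2 : ∑' q : ℕ × ℕ, FS q = ∑' k, ∑' n, FS (k, n) :=
    Summable.tsum_prod' summable_FS summable_FS.prod_factor
  calc ∑' p : ℕ × ℕ, fS p = ∑' p : ℕ × ℕ, FS ((p.1+p.2+1, p.2) : ℕ × ℕ) :=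
        tsum_congr fun p => (FS_comp p).symm
    _ = ∑' q : ℕ × ℕ, FS q := h1
    _ = ∑' k, ∑' n, FS (k, n) := h2
    _ = ∑' k, W k := tsum_congr FS_row

lemma jA_inj : Function.Injective (fun p : ℕ × ℕ => ((p.1+p.2+2, p.1) : ℕ × ℕ)) := by
  intro p q hpq
  simp only [Prod.ext_iff] at hpq ⊢
  omega

lemma FA_comp (p : ℕ × ℕ) : FA (p.1+p.2+2, p.1) = hA p := by
  obtain ⟨m, n⟩ := p
  unfold FA hA
  simp only
  rw [if_pos (by omega)]
  push_cast
  ring_nf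

lemma summable_hA : Summable hA :=
  (summable_FA.comp_injective jA_inj).congr fun p => FA_comp p

lemma FA_row (k : ℕ) : ∑' m, FA (k, m) = Pm k := by
  rw [tsum_eq_sum (s := range (k-1)) (fun m hm => by
    unfold FA; simp only; rw [if_neg (by simp at hm; omega)])]
  exact Finset.sum_congr rfl fun m hm => by
    unfold FA; simp only; rw [if_pos (by simp at hm; omega)]

lemma triangle_A : ∑' p : ℕ × ℕ, hA p = ∑' k, Pm k := by
  have hsupp : Function.support FA ⊆ Set.range (fun p : ℕ × ℕ => ((p.1+p.2+2, p.1) : ℕ × ℕ)) := by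
    rintro ⟨k, m⟩ h
    have hmk : m + 1 < k := by
      by_contra hc
      exact h (by unfold FA; simp only; rw [if_neg hc])
    exact ⟨(m, k-m-2), by dsimp only; simp only [Prod.mk.injEq, and_true]; omega⟩
  have h1 : ∑' p : ℕ × ℕ, FA ((p.1+p.2+2, p.1) : ℕ × ℕ) = ∑' q : ℕ × ℕ, FA q :=
    jA_inj.tsum_eq hsupp
  have h2 : ∑' q : ℕ × ℕ, FA q = ∑' k, ∑' m, FA (k, m) :=
    Summable.tsum_prod' summable_FA summable_FA.prod_factor
  calc ∑' p : ℕ × ℕ, hA p = ∑' p : ℕ × ℕ, FA ((p.1+p.2+2, p.1) : ℕ × ℕ) :=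
        tsum_congr fun p => (FA_comp p).symm
    _ = ∑' q : ℕ × ℕ, FA q := h1
    _ = ∑' k, ∑' m, FA (k, m) := h2
    _ = ∑' k, Pm k := tsum_congr FA_row

/-! ### Row sums, summability of the row-sum sequences -/

lemma summable_W : Summable W :=
  (((summable_prod_of_nonneg FS_nonneg).mp summable_FS).2).congr FS_row

lemma summable_Pm : Summable Pm :=
  (((summable_prod_of_nonneg FA_nonneg).mp summable_FA).2).congr FA_row

lemma summable_W_succ : Summable (fun m => W (m+1)) := (summable_nat_add_iff 1).2 summable_W

lemma summable_P_succ : Summable (fun m => Pfull (m+1)) :=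
  (((summable_prod_of_nonneg fA_nonneg).mp summable_fA).2).congr fun m => (inner_A m).tsum_eq

lemma B_eq : ∑' p : ℕ × ℕ, fB p = ∑' m, W (m+1) := by
  rw [Summable.tsum_prod' summable_fB summable_fB.prod_factor]
  exact tsum_congr fun m => (inner_B m).tsum_eq

lemma A_eq1 : ∑' p : ℕ × ℕ, fA p = ∑' m, Pfull (m+1) := by
  rw [Summable.tsum_prod' summable_fA summable_fA.prod_factor]
  exact tsum_congr fun m => (inner_A m).tsum_eq

lemma W_zero : W 0 = 0 := by unfold W; simp

lemma Pm_zero : Pm 0 = 0 := by unfold Pm; simp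

lemma S_eq_B : ∑' p : ℕ × ℕ, fS p = ∑' p : ℕ × ℕ, fB p := by
  rw [triangle_S, B_eq, tsum_eq_zero_add' summable_W_succ, W_zero, zero_add]

/-! ### Symmetrizations -/

lemma fT_split (p : ℕ × ℕ) : fT p = fS p + fS (p.2, p.1) := by
  obtain ⟨m, n⟩ := p
  unfold fT fS
  simp only
  have d1 : ((m:ℝ)+1/2) ≠ 0 := by positivity
  have d2 : ((n:ℝ)+1/2) ≠ 0 := by positivity
  have d3 : ((m:ℝ)+(n:ℝ)+1) ≠ 0 := by positivity
  have d4 : ((n:ℝ)+(m:ℝ)+1) ≠ 0 := by positivity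
  field_simp
  ring

lemma fA_split (p : ℕ × ℕ) : fA p = hA p + hA (p.2, p.1) := by
  obtain ⟨m, n⟩ := p
  unfold fA hA
  simp only
  have d1 : ((m:ℝ)+1) ≠ 0 := by positivity
  have d2 : ((n:ℝ)+1) ≠ 0 := by positivity
  have d3 : ((m:ℝ)+(n:ℝ)+2) ≠ 0 := by positivity
  have d4 : ((n:ℝ)+(m:ℝ)+2) ≠ 0 := by positivity
  field_simp
  ring

lemma summable_fS_swap : Summable (fun p : ℕ × ℕ => fS (p.2, p.1)) :=
  (Equiv.prodComm ℕ ℕ).summable_iff.mpr summable_fS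

lemma summable_hA_swap : Summable (fun p : ℕ × ℕ => hA (p.2, p.1)) :=
  (Equiv.prodComm ℕ ℕ).summable_iff.mpr summable_hA

lemma tsum_swap_fS : ∑' p : ℕ × ℕ, fS (p.2, p.1) = ∑' p : ℕ × ℕ, fS p :=
  (Equiv.prodComm ℕ ℕ).tsum_eq fS

lemma tsum_swap_hA : ∑' p : ℕ × ℕ, hA (p.2, p.1) = ∑' p : ℕ × ℕ, hA p :=
  (Equiv.prodComm ℕ ℕ).tsum_eq hA

lemma T_eq : ∑' p : ℕ × ℕ, fT p = 2 * ∑' p : ℕ × ℕ, fS p := by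
  calc ∑' p : ℕ × ℕ, fT p = ∑' p : ℕ × ℕ, (fS p + fS (p.2, p.1)) := tsum_congr fT_split
    _ = (∑' p : ℕ × ℕ, fS p) + ∑' p : ℕ × ℕ, fS (p.2, p.1) :=
        Summable.tsum_add summable_fS summable_fS_swap
    _ = 2 * ∑' p : ℕ × ℕ, fS p := by rw [tsum_swap_fS]; ring

lemma A_eq2 : ∑' p : ℕ × ℕ, fA p = 2 * ∑' p : ℕ × ℕ, hA p := by
  calc ∑' p : ℕ × ℕ, fA p = ∑' p : ℕ × ℕ, (hA p + hA (p.2, p.1)) := tsum_congr fA_split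
    _ = (∑' p : ℕ × ℕ, hA p) + ∑' p : ℕ × ℕ, hA (p.2, p.1) :=
        Summable.tsum_add summable_hA summable_hA_swap
    _ = 2 * ∑' p : ℕ × ℕ, hA p := by rw [tsum_swap_hA]; ring

/-! ### The value of A -/

lemma zeta3_summable : Summable (fun n : ℕ => 1/((n:ℝ)+1)^3) := by
  have h0 : Summable (fun n : ℕ => 1 / (n:ℝ)^3) := Real.summable_one_div_nat_pow.mpr (by norm_num)
  have := (summable_nat_add_iff 1).mpr h0
  simpa [Nat.cast_add] using this

lemma Pm_succ (m : ℕ) : Pm (m+1) = Pfull (m+1) - 1/((m:ℝ)+1)^3 := by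
  unfold Pm Pfull
  simp only [Nat.add_sub_cancel]
  rw [Finset.sum_range_succ]
  push_cast
  ring

lemma A_val : ∑' p : ℕ × ℕ, fA p = 2 * ∑' n : ℕ, 1/((n:ℝ)+1)^3 := by
  have hPm1 : Summable (fun m => Pm (m+1)) := (summable_nat_add_iff 1).2 summable_Pm
  have e1 : ∑' p : ℕ × ℕ, fA p = 2 * ∑' m, Pm (m+1) := by
    rw [A_eq2, triangle_A, tsum_eq_zero_add' hPm1, Pm_zero, zero_add]
  have e2 : ∑' m, Pm (m+1) = (∑' m, Pfull (m+1)) - ∑' n : ℕ, 1/((n:ℝ)+1)^3 := by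
    rw [← Summable.tsum_sub summable_P_succ zeta3_summable]
    exact tsum_congr fun m => Pm_succ m
  have e3 : ∑' m, Pfull (m+1) = ∑' p : ℕ × ℕ, fA p := A_eq1.symm
  linarith [e1, e2, e3]

/-! ### Parity splitting -/

lemma inj_dfst : Function.Injective (fun p : ℕ × ℕ => ((2*p.1, p.2) : ℕ × ℕ)) := by
  intro p q hpq
  simp only [Prod.ext_iff] at hpq ⊢
  omega

lemma inj_dfst1 : Function.Injective (fun p : ℕ × ℕ => ((2*p.1+1, p.2) : ℕ × ℕ)) := by
  intro p q hpq
  simp only [Prod.ext_iff] at hpq ⊢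
  omega

lemma inj_even : Function.Injective (fun k : ℕ => 2*k) := fun a b hab => by
  have : 2*a = 2*b := hab
  omega

lemma inj_odd : Function.Injective (fun k : ℕ => 2*k+1) := fun a b hab => by
  have : 2*a+1 = 2*b+1 := hab
  omega

set_option maxHeartbeats 1000000 in
lemma split_fst {h : ℕ × ℕ → ℝ} (h0 : ∀ p, 0 ≤ h p) (hs : Summable h) :
    ∑' p : ℕ × ℕ, h p = (∑' p : ℕ × ℕ, h (2*p.1, p.2)) + ∑' p : ℕ × ℕ, h (2*p.1+1, p.2) := by
  have h1 : Summable (fun p : ℕ × ℕ => h (2*p.1, p.2)) := hs.comp_injective inj_dfst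
  have h2 : Summable (fun p : ℕ × ℕ => h (2*p.1+1, p.2)) := hs.comp_injective inj_dfst1
  have houter : Summable (fun m => ∑' n, h (m, n)) := ((summable_prod_of_nonneg h0).mp hs).2
  rw [Summable.tsum_prod' hs hs.prod_factor, Summable.tsum_prod' h1 h1.prod_factor, Summable.tsum_prod' h2 h2.prod_factor]
  exact (tsum_even_add_odd (f := fun m => ∑' n, h (m, n)) (houter.comp_injective inj_even)
    (houter.comp_injective inj_odd)).symm

lemma split_snd {h : ℕ × ℕ → ℝ} (h0 : ∀ p, 0 ≤ h p) (hs : Summable h) :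
    ∑' p : ℕ × ℕ, h p = (∑' p : ℕ × ℕ, h (p.1, 2*p.2)) + ∑' p : ℕ × ℕ, h (p.1, 2*p.2+1) := by
  have hsw : Summable (fun p : ℕ × ℕ => h (p.2, p.1)) :=
    (Equiv.prodComm ℕ ℕ).summable_iff.mpr hs
  have h0' : ∀ p : ℕ × ℕ, 0 ≤ h (p.2, p.1) := fun p => h0 _
  have e0 : ∑' p : ℕ × ℕ, h p = ∑' p : ℕ × ℕ, h (p.2, p.1) :=
    ((Equiv.prodComm ℕ ℕ).tsum_eq h).symm
  have e1 : ∑' p : ℕ × ℕ, h (p.2, p.1)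
      = (∑' p : ℕ × ℕ, h (p.2, 2*p.1)) + ∑' p : ℕ × ℕ, h (p.2, 2*p.1+1) :=
    split_fst h0' hsw
  have e2 : ∑' p : ℕ × ℕ, h (p.2, 2*p.1) = ∑' p : ℕ × ℕ, h (p.1, 2*p.2) :=
    (Equiv.prodComm ℕ ℕ).tsum_eq (fun q : ℕ × ℕ => h (q.1, 2*q.2))
  have e3 : ∑' p : ℕ × ℕ, h (p.2, 2*p.1+1) = ∑' p : ℕ × ℕ, h (p.1, 2*p.2+1) :=
    (Equiv.prodComm ℕ ℕ).tsum_eq (fun q : ℕ × ℕ => h (q.1, 2*q.2+1))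
  rw [e0, e1, e2, e3]

/-! ### Identifying the parity classes -/

lemma class00 (p : ℕ × ℕ) : 8 * fA (2*p.1, 2*p.2) = fT p := by
  obtain ⟨m, n⟩ := p
  unfold fA fT
  simp only
  push_cast
  rw [mul_one_div, div_eq_div_iff (by positivity) (by positivity)]
  ring

lemma class01 (p : ℕ × ℕ) : 8 * fA (2*p.1, 2*p.2+1) = fB (p.2, p.1) := by
  obtain ⟨m, n⟩ := p
  unfold fA fB
  simp only
  push_cast
  rw [mul_one_div, div_eq_div_iff (by positivity) (by positivity)]
  ring

lemma class10 (p : ℕ × ℕ) : 8 * fA (2*p.1+1, 2*p.2) = fB p := by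
  obtain ⟨m, n⟩ := p
  unfold fA fB
  simp only
  push_cast
  rw [mul_one_div, div_eq_div_iff (by positivity) (by positivity)]
  ring

lemma class11 (p : ℕ × ℕ) : 8 * fA (2*p.1+1, 2*p.2+1) = fA p := by
  obtain ⟨m, n⟩ := p
  unfold fA
  simp only
  push_cast
  rw [mul_one_div, div_eq_div_iff (by positivity) (by positivity)]
  ring

lemma tsum_swap_fB : ∑' p : ℕ × ℕ, fB (p.2, p.1) = ∑' p : ℕ × ℕ, fB p :=
  (Equiv.prodComm ℕ ℕ).tsum_eq fB

lemma key_G : 8 * ∑' p : ℕ × ℕ, fA p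
    = (∑' p : ℕ × ℕ, fT p) + (∑' p : ℕ × ℕ, fB p) + ((∑' p : ℕ × ℕ, fB p)
      + ∑' p : ℕ × ℕ, fA p) := by
  have h0 : ∀ p : ℕ × ℕ, 0 ≤ 8 * fA p := fun p => mul_nonneg (by norm_num) (fA_nonneg p)
  have hs : Summable (fun p : ℕ × ℕ => 8 * fA p) := summable_fA.mul_left 8
  have h1 : Summable (fun p : ℕ × ℕ => 8 * fA (2*p.1, p.2)) := hs.comp_injective inj_dfst
  have h2 : Summable (fun p : ℕ × ℕ => 8 * fA (2*p.1+1, p.2)) := hs.comp_injective inj_dfst1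
  have e1 : ∑' p : ℕ × ℕ, 8 * fA (2*p.1, p.2)
      = (∑' p : ℕ × ℕ, 8 * fA (2*p.1, 2*p.2)) + ∑' p : ℕ × ℕ, 8 * fA (2*p.1, 2*p.2+1) :=
    split_snd (fun p => h0 _) h1
  have e2 : ∑' p : ℕ × ℕ, 8 * fA (2*p.1+1, p.2)
      = (∑' p : ℕ × ℕ, 8 * fA (2*p.1+1, 2*p.2)) + ∑' p : ℕ × ℕ, 8 * fA (2*p.1+1, 2*p.2+1) :=
    split_snd (fun p => h0 _) h2
  calc 8 * ∑' p : ℕ × ℕ, fA p = ∑' p : ℕ × ℕ, 8 * fA p := tsum_mul_left.symm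
    _ = (∑' p : ℕ × ℕ, 8 * fA (2*p.1, p.2)) + ∑' p : ℕ × ℕ, 8 * fA (2*p.1+1, p.2) :=
        split_fst h0 hs
    _ = ((∑' p : ℕ × ℕ, 8 * fA (2*p.1, 2*p.2)) + ∑' p : ℕ × ℕ, 8 * fA (2*p.1, 2*p.2+1))
        + ((∑' p : ℕ × ℕ, 8 * fA (2*p.1+1, 2*p.2))
          + ∑' p : ℕ × ℕ, 8 * fA (2*p.1+1, 2*p.2+1)) := by rw [e1, e2]
    _ = ((∑' p : ℕ × ℕ, fT p) + ∑' p : ℕ × ℕ, fB (p.2, p.1))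
        + ((∑' p : ℕ × ℕ, fB p) + ∑' p : ℕ × ℕ, fA p) := by
        rw [tsum_congr class00, tsum_congr class01, tsum_congr class10, tsum_congr class11]
    _ = (∑' p : ℕ × ℕ, fT p) + (∑' p : ℕ × ℕ, fB p)
        + ((∑' p : ℕ × ℕ, fB p) + ∑' p : ℕ × ℕ, fA p) := by rw [tsum_swap_fB]

lemma S_val : ∑' p : ℕ × ℕ, fS p = (7/2) * ∑' n : ℕ, 1/((n:ℝ)+1)^3 := by
  have h1 := key_G
  have h2 := T_eq
  have h3 := S_eq_B
  have h4 := A_val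
  linarith

end DSH

open scoped BigOperators

theorem double_series_half_shift :
    Summable (fun p : ℕ × ℕ =>
        1 / (((p.2 : ℝ) + 1 / 2) * ((p.1 : ℝ) + (p.2 : ℝ) + 1) ^ 2)) ∧
      (∑' p : ℕ × ℕ, 1 / (((p.2 : ℝ) + 1 / 2) * ((p.1 : ℝ) + (p.2 : ℝ) + 1) ^ 2))
        = (7 / 2) * ∑' n : ℕ, 1 / ((n : ℝ) + 1) ^ 3 := by
  constructor
  · exact DSH.summable_fS
  · exact DSH.S_val
end

section
/- Let N be an odd positive integer and ξ a primitive N-th root of unity. Then for every integer n: ∑_{a=0}^{N−1} ((2a−N)/N) ξ^{−an} = −1 if N divides n, and equals 2/(ξ^{−n} − 1) if N does not divide n. -/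
open scoped BigOperators

lemma aux_weighted (ω : ℂ) (N : ℕ) :
    (ω - 1) * ∑ a ∈ Finset.range N, (a : ℂ) * ω ^ a
      = ((N : ℂ) - 1) * ω ^ N - ∑ a ∈ Finset.range N, ω ^ a + 1 := by
  induction N with
  | zero => simp
  | succ m ih =>
    rw [Finset.sum_range_succ, Finset.sum_range_succ, mul_add, ih]
    push_cast
    ring

theorem root_of_unity_weighted_sum (N : ℕ) (hN : 0 < N) (hNodd : Odd N)
    (ξ : ℂ) (hξ : IsPrimitiveRoot ξ N) (n : ℤ) :
    ∑ a ∈ Finset.range N, ((2 * (a : ℂ) - N) / N) * ξ ^ (-(a : ℤ) * n)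
      = if (N : ℤ) ∣ n then -1 else 2 / (ξ ^ (-n) - 1) := by
  have hN0 : (N : ℂ) ≠ 0 := Nat.cast_ne_zero.mpr hN.ne'
  set ω : ℂ := ξ ^ (-n) with hω
  have hterm : ∀ a ∈ Finset.range N, ((2 * (a : ℂ) - N) / N) * ξ ^ (-(a : ℤ) * n)
      = ((2 * (a : ℂ) - N) / N) * ω ^ a := by
    intro a _
    rw [show (-(a : ℤ) * n) = (-n) * a by ring, zpow_mul, zpow_natCast]
  rw [Finset.sum_congr rfl hterm]
  have hgauss : (∑ a ∈ Finset.range N, (a : ℂ)) * 2 = N * (N - 1) := by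
    have h := Finset.sum_range_id_mul_two N
    have : ((∑ i ∈ Finset.range N, i) * 2 : ℕ) = (N * (N - 1) : ℕ) := h
    have h2 := congrArg (Nat.cast : ℕ → ℂ) this
    push_cast [Nat.cast_sub hN] at h2
    exact h2
  by_cases hdvd : (N : ℤ) ∣ n
  · rw [if_pos hdvd]
    have hω1 : ω = 1 := by
      rw [hω]
      exact hξ.zpow_eq_one_iff_dvd (-n) |>.mpr (dvd_neg.mpr hdvd)
    simp only [hω1, one_pow, mul_one]
    have : ∑ a ∈ Finset.range N, ((2 * (a : ℂ) - N) / N)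
        = (∑ a ∈ Finset.range N, (2 * (a : ℂ) - N)) / N := by
      rw [Finset.sum_div]
    rw [this, Finset.sum_sub_distrib, ← Finset.mul_sum, Finset.sum_const,
      Finset.card_range]
    field_simp
    linear_combination hgauss
  · rw [if_neg hdvd]
    have hωN : ω ^ N = 1 := by
      rw [hω, ← zpow_natCast, ← zpow_mul, mul_comm, zpow_mul, zpow_natCast,
        hξ.pow_eq_one, one_zpow]
    have hω1 : ω ≠ 1 := fun h => hdvd (by
      have := (hξ.zpow_eq_one_iff_dvd (-n)).mp (hω ▸ h)
      exact dvd_neg.mp this)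
    have hωsub : ω - 1 ≠ 0 := sub_ne_zero.mpr hω1
    have hgeom : ∑ a ∈ Finset.range N, ω ^ a = 0 := by
      have := geom_sum_mul ω N
      rw [hωN, sub_self] at this
      exact (mul_eq_zero.mp this).resolve_right hωsub
    have hS : ∑ a ∈ Finset.range N, (a : ℂ) * ω ^ a = N / (ω - 1) := by
      have h := aux_weighted ω N
      rw [hωN, hgeom, mul_one] at h
      field_simp
      linear_combination h
    have : ∑ a ∈ Finset.range N, ((2 * (a : ℂ) - N) / N) * ω ^ a
        = (2 / N) * (∑ a ∈ Finset.range N, (a : ℂ) * ω ^ a)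
          - ∑ a ∈ Finset.range N, ω ^ a := by
      rw [Finset.mul_sum, ← Finset.sum_sub_distrib]
      apply Finset.sum_congr rfl
      intro a _
      field_simp
    rw [this, hS, hgeom, sub_zero]
    field_simp
end
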